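/- Under the base setup, let D : Ω → ℝ be bounded, σ(W, A, Δ, Y)-measurable with E[D] = 0, and for |ε| < 1/(‖D‖_∞ + 1) let P_ε be the probability measure with density (1 + εD) with respect to P. For a probability measure μ with bounded density with respect to P such that the quantities below are a.s. positive, define Ψᵥ(μ) := E_μ[ E_μ[ (E_μ[YΔ ∣ 𝒢₁]/E_μ[Δ ∣ 𝒢₁])·1{A ≥ v} ∣ 𝒢₀ ] / E_μ[1{A ≥ v} ∣ 𝒢₀] ]. Then the map ε ↦ Ψᵥ(P_ε) is differentiable at ε = 0 with derivative (d/dε) Ψᵥ(P_ε)|_{ε=0} = E[D·D₀], where D₀ is the efficient influence function. -/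

import Mathlib

open MeasureTheory ProbabilityTheory
open scoped ENNReal NNReal

section AuxLemmas

/-- integrable of a.e. bound, finite measure -/
lemma my_integrable_of_bound {Ω : Type*} [mΩ : MeasurableSpace Ω]
    (μ : Measure Ω) [IsFiniteMeasure μ] {f : Ω → ℝ} (M : ℝ)
    (hf : AEStronglyMeasurable f μ) (h : ∀ᵐ ω ∂μ, |f ω| ≤ M) : Integrable f μ :=
  (integrable_const M).mono' hf (h.mono fun ω hω => by rwa [Real.norm_eq_abs])

/-- SWAP: ∫ V·E[X|m] = ∫ V·X for m-strongly measurable V -/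
lemma my_integral_condexp_mul {Ω : Type*} {m : MeasurableSpace Ω} [mΩ : MeasurableSpace Ω]
    (μ : Measure Ω) [IsFiniteMeasure μ] (hm : m ≤ mΩ) {X V : Ω → ℝ}
    (hV : StronglyMeasurable[m] V) (hX : Integrable X μ)
    (hVX : Integrable (fun ω => V ω * X ω) μ) :
    ∫ ω, V ω * (μ[X|m]) ω ∂μ = ∫ ω, V ω * X ω ∂μ := by
  have h := condExp_mul_of_stronglyMeasurable_left (μ := μ) hV hVX hX
  calc ∫ ω, V ω * (μ[X|m]) ω ∂μ = ∫ ω, (μ[fun ω' => V ω' * X ω'|m]) ω ∂μ := by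
        refine integral_congr_ae ?_
        filter_upwards [h] with ω hω
        simpa [Pi.mul_def] using hω.symm
    _ = ∫ ω, V ω * X ω ∂μ := integral_condExp hm

lemma my_isFiniteMeasure_withDensity {Ω : Type*} [mΩ : MeasurableSpace Ω]
    (μ : Measure Ω) [IsFiniteMeasure μ] {ρ : Ω → ℝ} (u : ℝ)
    (hρu : ∀ ω, ρ ω ≤ u) :
    IsFiniteMeasure (μ.withDensity (fun ω => ENNReal.ofReal (ρ ω))) := by
  constructor
  rw [withDensity_apply _ MeasurableSet.univ]
  calc ∫⁻ ω in Set.univ, ENNReal.ofReal (ρ ω) ∂μ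
      ≤ ∫⁻ _ω in Set.univ, ENNReal.ofReal u ∂μ :=
        lintegral_mono fun ω => ENNReal.ofReal_le_ofReal (hρu ω)
    _ = ENNReal.ofReal u * μ Set.univ := by rw [setLIntegral_const]
    _ < ⊤ := ENNReal.mul_lt_top ENNReal.ofReal_lt_top (measure_lt_top μ _)

lemma my_ac_withDensity {Ω : Type*} [mΩ : MeasurableSpace Ω]
    (μ : Measure Ω) {ρ : Ω → ℝ} (hρ : Measurable ρ) {l : ℝ} (hl : 0 < l)
    (hρl : ∀ ω, l ≤ ρ ω) :
    μ ≪ μ.withDensity (fun ω => ENNReal.ofReal (ρ ω)) := by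
  refine withDensity_absolutelyContinuous' (hρ.ennreal_ofReal).aemeasurable ?_
  refine Filter.Eventually.of_forall fun ω => ?_
  simp only [ne_eq, ENNReal.ofReal_eq_zero, not_le]
  exact lt_of_lt_of_le hl (hρl ω)

/-- conditional expectation under a withDensity measure -/
lemma my_condexp_withDensity {Ω : Type*} {m : MeasurableSpace Ω} [mΩ : MeasurableSpace Ω]
    (μ : Measure Ω) [IsProbabilityMeasure μ] (hm : m ≤ mΩ)
    {ρ : Ω → ℝ} (hρ : Measurable ρ) {l u : ℝ} (hl : 0 < l)
    (hρl : ∀ ω, l ≤ ρ ω) (hρu : ∀ ω, ρ ω ≤ u)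
    {f : Ω → ℝ} (hf : Measurable f) {B : ℝ} (hfB : ∀ ω, |f ω| ≤ B) :
    (μ.withDensity (fun ω => ENNReal.ofReal (ρ ω)))[f|m]
      =ᵐ[μ] fun ω => (μ[fun x => f x * ρ x|m]) ω / (μ[ρ|m]) ω := by
  set ν := μ.withDensity (fun ω => ENNReal.ofReal (ρ ω)) with hν
  haveI : IsFiniteMeasure ν := my_isFiniteMeasure_withDensity μ u hρu
  have hac : ν ≪ μ := withDensity_absolutelyContinuous μ _
  have hac' : μ ≪ ν := my_ac_withDensity μ hρ hl hρl
  haveI : Nonempty Ω := μ.nonempty_of_neZero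
  have hlu : l ≤ u := (hρl (Classical.arbitrary Ω)).trans (hρu (Classical.arbitrary Ω))
  have hu : 0 < u := lt_of_lt_of_le hl hlu
  have hB0 : 0 ≤ B := (abs_nonneg _).trans (hfB (Classical.arbitrary Ω))
  have hρ0 : ∀ ω, 0 ≤ ρ ω := fun ω => le_of_lt (lt_of_lt_of_le hl (hρl ω))
  have hρabs : ∀ ω, |ρ ω| ≤ u := fun ω => abs_le.2 ⟨by nlinarith [hρl ω], hρu ω⟩
  have hρint : Integrable ρ μ :=
    my_integrable_of_bound μ u hρ.aestronglyMeasurable (.of_forall hρabs)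
  have hfρabs : ∀ ω, |f ω * ρ ω| ≤ B * u := fun ω => by
    rw [abs_mul]
    exact mul_le_mul (hfB ω) (hρabs ω) (abs_nonneg _) hB0
  have hfρint : Integrable (fun ω => f ω * ρ ω) μ :=
    my_integrable_of_bound μ (B * u) (hf.mul hρ).aestronglyMeasurable (.of_forall hfρabs)
  -- a.e. facts under μ
  have hcl : ∀ᵐ ω ∂μ, l ≤ (μ[ρ|m]) ω := by
    have h2 := condExp_mono (m := m) (μ := μ) (integrable_const l) hρint
      (Filter.Eventually.of_forall hρl)
    filter_upwards [h2] with ω hω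
    rwa [condExp_const hm] at hω
  have hcb : ∀ᵐ ω ∂μ, |(μ[fun x => f x * ρ x|m]) ω| ≤ B * u := by
    have h2 := ae_bdd_condExp_of_ae_bdd (m := m) (μ := μ) (R := (B * u).toNNReal)
      (f := fun ω => f ω * ρ ω)
      (Filter.Eventually.of_forall fun ω => by
        rw [Real.coe_toNNReal _ (by positivity)]; exact hfρabs ω)
    filter_upwards [h2] with ω hω
    rwa [Real.coe_toNNReal _ (by positivity)] at hω
  set g : Ω → ℝ := fun ω => (μ[fun x => f x * ρ x|m]) ω / (μ[ρ|m]) ω with hg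
  have hgsm : StronglyMeasurable[m] g :=
    (stronglyMeasurable_condExp.measurable.div
      stronglyMeasurable_condExp.measurable).stronglyMeasurable
  have hgb : ∀ᵐ ω ∂μ, |g ω| ≤ B * u / l := by
    filter_upwards [hcl, hcb] with ω h1 h2
    rw [hg, abs_div]
    rw [abs_of_pos (lt_of_lt_of_le hl h1)]
    exact div_le_div₀ (by positivity) h2 hl h1
  have hgρint : Integrable (fun ω => g ω * ρ ω) μ :=
    my_integrable_of_bound μ (B * u / l * u)
      ((hgsm.mono hm).aestronglyMeasurable.mul hρ.aestronglyMeasurable)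
      (by filter_upwards [hgb] with ω h1
          rw [abs_mul]
          exact mul_le_mul h1 (hρabs ω) (abs_nonneg _) (by positivity))
  have hgμρ : (fun ω => g ω * (μ[ρ|m]) ω) =ᵐ[μ] μ[fun x => f x * ρ x|m] := by
    filter_upwards [hcl] with ω h1
    rw [hg]
    exact div_mul_cancel₀ _ (ne_of_gt (lt_of_lt_of_le hl h1))
  have hgρ_ce : μ[fun x => g x * ρ x|m] =ᵐ[μ] fun x => g x * (μ[ρ|m]) x := by
    have := condExp_mul_of_stronglyMeasurable_left (μ := μ) hgsm hgρint hρint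
    filter_upwards [this] with ω hω
    simpa [Pi.mul_def] using hω
  -- the withDensity rewriting
  have hνdef : ν = μ.withDensity (fun ω => ((ρ ω).toNNReal : ℝ≥0∞)) := rfl
  have hsmul : ∀ (ψ : Ω → ℝ) (s : Set Ω), MeasurableSet s →
      ∫ ω in s, ψ ω ∂ν = ∫ ω in s, ψ ω * ρ ω ∂μ := by
    intro ψ s hs
    rw [hνdef, setIntegral_withDensity_eq_setIntegral_smul
      (f := fun ω => (ρ ω).toNNReal) hρ.real_toNNReal ψ hs]
    refine setIntegral_congr_ae hs ?_
    refine Filter.Eventually.of_forall fun ω _ => ?_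
    rw [NNReal.smul_def, Real.coe_toNNReal _ (hρ0 ω), smul_eq_mul, mul_comm]
  have hfν : Integrable f ν := my_integrable_of_bound ν B
    hf.aestronglyMeasurable (Filter.Eventually.of_forall hfB)
  have key : g =ᵐ[ν] ν[f|m] := by
    refine ae_eq_condExp_of_forall_setIntegral_eq hm hfν ?_ ?_
      ((hgsm.aestronglyMeasurable (μ := ν)))
    · intro s _ _
      refine Integrable.integrableOn ?_
      refine my_integrable_of_bound ν (B * u / l)
        (hgsm.mono hm).aestronglyMeasurable ?_
      exact hgb.filter_mono hac.ae_le
    · intro s hs _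
      have hsΩ : MeasurableSet s := hm s hs
      rw [hsmul g s hsΩ, hsmul f s hsΩ]
      calc ∫ ω in s, g ω * ρ ω ∂μ
          = ∫ ω in s, (μ[fun x => g x * ρ x|m]) ω ∂μ :=
            (setIntegral_condExp hm hgρint hs).symm
        _ = ∫ ω in s, g ω * (μ[ρ|m]) ω ∂μ :=
            setIntegral_congr_ae hsΩ (hgρ_ce.mono fun ω hω _ => hω)
        _ = ∫ ω in s, (μ[fun x => f x * ρ x|m]) ω ∂μ :=
            setIntegral_congr_ae hsΩ (hgμρ.mono fun ω hω _ => hω)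
        _ = ∫ ω in s, f ω * ρ ω ∂μ := setIntegral_condExp hm hfρint hs
  exact (key.filter_mono hac'.ae_le).symm

end AuxLemmas

section Aux2

lemma my_integral_withDensity {Ω : Type*} [mΩ : MeasurableSpace Ω]
    (μ : Measure Ω) {ρ : Ω → ℝ} (hρ : Measurable ρ) (hρ0 : ∀ ω, 0 ≤ ρ ω) (ψ : Ω → ℝ) :
    ∫ ω, ψ ω ∂(μ.withDensity (fun ω => ENNReal.ofReal (ρ ω))) = ∫ ω, ψ ω * ρ ω ∂μ := by
  have hνdef : μ.withDensity (fun ω => ENNReal.ofReal (ρ ω))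
      = μ.withDensity (fun ω => ((ρ ω).toNNReal : ℝ≥0∞)) := rfl
  rw [hνdef, integral_withDensity_eq_integral_smul hρ.real_toNNReal ψ]
  refine integral_congr_ae (Filter.Eventually.of_forall fun ω => ?_)
  show (ρ ω).toNNReal • ψ ω = ψ ω * ρ ω
  rw [NNReal.smul_def, Real.coe_toNNReal _ (hρ0 ω), smul_eq_mul, mul_comm]

lemma my_psi_pullout {Ω : Type*} {m0 m1 : MeasurableSpace Ω} [mΩ : MeasurableSpace Ω]
    (ν : Measure Ω) [IsFiniteMeasure ν] (hm01 : m0 ≤ m1) (hm1 : m1 ≤ mΩ)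
    {S T ind : Ω → ℝ} (hS : Measurable S) (hT : Measurable T)
    (hS1 : ∀ ω, |S ω| ≤ 1) (hT1 : ∀ ω, |T ω| ≤ 1)
    (hind : StronglyMeasurable[m1] ind) (hind1 : ∀ ω, |ind ω| ≤ 1)
    {β : ℝ} (hβ : 0 < β)
    (hG : ∀ᵐ ω ∂ν, β ≤ (ν[T|m1]) ω) (hg : ∀ᵐ ω ∂ν, β ≤ (ν[ind|m0]) ω) :
    ∫ ω, (ν[fun ω' => ((ν[S|m1]) ω' / (ν[T|m1]) ω') * ind ω'|m0]) ω / (ν[ind|m0]) ω ∂ν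
      = ∫ ω, S ω * ind ω / ((ν[T|m1]) ω * (ν[ind|m0]) ω) ∂ν := by
  have hm0 : m0 ≤ mΩ := hm01.trans hm1
  set N := ν[S|m1] with hN
  set G := ν[T|m1] with hG'
  set gg := ν[ind|m0] with hgg
  set X : Ω → ℝ := fun ω => (N ω / G ω) * ind ω with hX
  have hNsm : AEStronglyMeasurable N ν :=
    (stronglyMeasurable_condExp.mono hm1).aestronglyMeasurable
  have hGsm : AEStronglyMeasurable G ν :=
    (stronglyMeasurable_condExp.mono hm1).aestronglyMeasurable
  have hNb : ∀ᵐ ω ∂ν, |N ω| ≤ 1 := by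
    have h2 := ae_bdd_condExp_of_ae_bdd (m := m1) (μ := ν) (R := 1)
      (f := S) (Filter.Eventually.of_forall fun ω => by simpa using hS1 ω)
    filter_upwards [h2] with ω hω
    simpa using hω
  have hGinv : ∀ᵐ ω ∂ν, |(G ω)⁻¹| ≤ β⁻¹ := by
    filter_upwards [hG] with ω hω
    rw [abs_inv, abs_of_pos (lt_of_lt_of_le hβ hω)]
    exact inv_anti₀ hβ hω
  have hgginv : ∀ᵐ ω ∂ν, |(gg ω)⁻¹| ≤ β⁻¹ := by
    filter_upwards [hg] with ω hω
    rw [abs_inv, abs_of_pos (lt_of_lt_of_le hβ hω)]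
    exact inv_anti₀ hβ hω
  have hXb : ∀ᵐ ω ∂ν, |X ω| ≤ β⁻¹ := by
    filter_upwards [hNb, hGinv] with ω h1 h2
    rw [hX]
    calc |N ω / G ω * ind ω| = |N ω| * |(G ω)⁻¹| * |ind ω| := by
          rw [div_eq_mul_inv, abs_mul, abs_mul]
      _ ≤ 1 * β⁻¹ * 1 := by
          refine mul_le_mul (mul_le_mul h1 h2 (abs_nonneg _) zero_le_one)
            (hind1 ω) (abs_nonneg _) (by positivity)
      _ = β⁻¹ := by ring
  have hXsm : AEStronglyMeasurable X ν :=
    (((stronglyMeasurable_condExp.mono hm1).measurable.div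
      (stronglyMeasurable_condExp.mono hm1).measurable).mul
      (hind.mono hm1).measurable).aestronglyMeasurable
  have hXint : Integrable X ν := my_integrable_of_bound ν β⁻¹ hXsm hXb
  have hVsm : StronglyMeasurable[m0] (fun ω => (gg ω)⁻¹) :=
    (stronglyMeasurable_condExp.measurable.inv).stronglyMeasurable
  have hVXint : Integrable (fun ω => (gg ω)⁻¹ * X ω) ν := by
    refine my_integrable_of_bound ν (β⁻¹ * β⁻¹)
      (((hVsm.mono hm0).aestronglyMeasurable).mul hXsm) ?_
    filter_upwards [hgginv, hXb] with ω h1 h2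
    rw [abs_mul]
    exact mul_le_mul h1 h2 (abs_nonneg _) (by positivity)
  have step1 : ∫ ω, (ν[X|m0]) ω / gg ω ∂ν = ∫ ω, (gg ω)⁻¹ * X ω ∂ν := by
    rw [← my_integral_condexp_mul ν hm0 hVsm hXint hVXint]
    exact integral_congr_ae (Filter.Eventually.of_forall fun ω => by
      show (ν[X|m0]) ω / gg ω = (gg ω)⁻¹ * (ν[X|m0]) ω
      rw [div_eq_inv_mul])
  set V1 : Ω → ℝ := fun ω => ind ω * ((G ω)⁻¹ * (gg ω)⁻¹) with hV1
  have hV1sm : StronglyMeasurable[m1] V1 :=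
    (hind.measurable.mul ((stronglyMeasurable_condExp.measurable.inv).mul
      (((stronglyMeasurable_condExp.mono hm01).measurable.inv)))).stronglyMeasurable
  have hSint : Integrable S ν :=
    my_integrable_of_bound ν 1 hS.aestronglyMeasurable (Filter.Eventually.of_forall hS1)
  have hV1b : ∀ᵐ ω ∂ν, |V1 ω| ≤ β⁻¹ * β⁻¹ := by
    filter_upwards [hGinv, hgginv] with ω h1 h2
    rw [hV1, abs_mul, abs_mul]
    calc |ind ω| * (|(G ω)⁻¹| * |(gg ω)⁻¹|)
        ≤ 1 * (β⁻¹ * β⁻¹) := by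
          refine mul_le_mul (hind1 ω) (mul_le_mul h1 h2 (abs_nonneg _) (by positivity))
            (by positivity) zero_le_one
      _ = β⁻¹ * β⁻¹ := by ring
  have hV1Sint : Integrable (fun ω => V1 ω * S ω) ν := by
    refine my_integrable_of_bound ν (β⁻¹ * β⁻¹ * 1)
      (((hV1sm.mono hm1).aestronglyMeasurable).mul hS.aestronglyMeasurable) ?_
    filter_upwards [hV1b] with ω h1
    rw [abs_mul]
    exact mul_le_mul h1 (hS1 ω) (abs_nonneg _) (by positivity)
  have step2 : ∫ ω, (gg ω)⁻¹ * X ω ∂ν = ∫ ω, V1 ω * N ω ∂ν :=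
    integral_congr_ae (Filter.Eventually.of_forall fun ω => by
      show (gg ω)⁻¹ * (N ω / G ω * ind ω) = ind ω * ((G ω)⁻¹ * (gg ω)⁻¹) * N ω
      rw [div_eq_mul_inv]; ring)
  have step3 : ∫ ω, V1 ω * N ω ∂ν = ∫ ω, V1 ω * S ω ∂ν :=
    my_integral_condexp_mul ν hm1 hV1sm hSint hV1Sint
  have step4 : ∫ ω, V1 ω * S ω ∂ν = ∫ ω, S ω * ind ω / (G ω * gg ω) ∂ν :=
    integral_congr_ae (Filter.Eventually.of_forall fun ω => by
      show ind ω * ((G ω)⁻¹ * (gg ω)⁻¹) * S ω = S ω * ind ω / (G ω * gg ω)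
      rw [div_eq_mul_inv, mul_inv]; ring)
  rw [step1, step2, step3, step4]

end Aux2

section Deriv

/-- derivative of the rational function in ε -/
lemma my_hasDerivAt_ratfn (K e1 e0 Dv c d g h x : ℝ) (hQ : (c+x*d)*(g+x*h) ≠ 0) :
    HasDerivAt (fun y => K * ((1+y*e1)*(1+y*e0)*(1+y*Dv)) / ((c+y*d)*(g+y*h)))
      ((K * ((e1*(1+x*e0) + (1+x*e1)*e0)*(1+x*Dv) + (1+x*e1)*(1+x*e0)*Dv) * ((c+x*d)*(g+x*h))
        - K * ((1+x*e1)*(1+x*e0)*(1+x*Dv)) * (d*(g+x*h)+(c+x*d)*h)) / ((c+x*d)*(g+x*h))^2) x := by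
  have l1 : HasDerivAt (fun y : ℝ => 1 + y*e1) e1 x := (hasDerivAt_mul_const e1).const_add 1
  have l0 : HasDerivAt (fun y : ℝ => 1 + y*e0) e0 x := (hasDerivAt_mul_const e0).const_add 1
  have lD : HasDerivAt (fun y : ℝ => 1 + y*Dv) Dv x := (hasDerivAt_mul_const Dv).const_add 1
  have lc : HasDerivAt (fun y : ℝ => c + y*d) d x := (hasDerivAt_mul_const d).const_add c
  have lg : HasDerivAt (fun y : ℝ => g + y*h) h x := (hasDerivAt_mul_const h).const_add g
  have hP := (((l1.mul l0).mul lD).const_mul K)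
  have hQd := lc.mul lg
  exact hP.div hQd hQ

lemma my_ratfn_bound (C δ K e1 e0 Dv c d g h x : ℝ)
    (hC : 0 ≤ C) (hδ0 : 0 < δ) (hδ1 : δ ≤ 1)
    (hK : |K| ≤ 1) (he1 : |e1| ≤ C) (he0 : |e0| ≤ C) (hD : |Dv| ≤ C)
    (hd : |d| ≤ C) (hh : |h| ≤ C)
    (hc : δ ≤ c) (hc1 : c ≤ 1) (hg : δ ≤ g) (hg1 : g ≤ 1)
    (hx : |x| ≤ δ/(2*(C+1))) :
    δ^2/4 ≤ (c+x*d)*(g+x*h) ∧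
    |(K * ((e1*(1+x*e0) + (1+x*e1)*e0)*(1+x*Dv) + (1+x*e1)*(1+x*e0)*Dv) * ((c+x*d)*(g+x*h))
        - K * ((1+x*e1)*(1+x*e0)*(1+x*Dv)) * (d*(g+x*h)+(c+x*d)*h)) / ((c+x*d)*(g+x*h))^2|
      ≤ 1280*(C+1)/δ^4 ∧
    |K * ((1+x*e1)*(1+x*e0)*(1+x*Dv)) / ((c+x*d)*(g+x*h))| ≤ 32/δ^2 := by
  have bmul : ∀ (a b A B : ℝ), |a| ≤ A → |b| ≤ B → 0 ≤ A → |a*b| ≤ A*B := fun a b A B ha hb hA =>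
    by rw [abs_mul]; exact mul_le_mul ha hb (abs_nonneg _) hA
  have badd : ∀ (a b A B : ℝ), |a| ≤ A → |b| ≤ B → |a+b| ≤ A+B := fun a b A B ha hb =>
    (abs_add_le a b).trans (add_le_add ha hb)
  have hxC : |x| * C ≤ δ/2 := by
    have h1 : |x| * C ≤ (δ/(2*(C+1)))*C :=
      mul_le_mul_of_nonneg_right hx hC
    have h2 : (δ/(2*(C+1)))*C ≤ δ/2 := by
      rw [div_mul_eq_mul_div, div_le_div_iff₀ (by positivity) (by norm_num)]
      nlinarith
    linarith
  have hδh : δ/2 ≤ 1/2 := by linarith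
  have habs : ∀ t : ℝ, |t| ≤ C → |1+x*t| ≤ 2 := by
    intro t ht
    calc |1+x*t| ≤ |(1:ℝ)| + |x*t| := abs_add_le _ _
      _ ≤ 1 + |x| * C := by
          rw [abs_one, abs_mul]
          exact add_le_add_right (mul_le_mul_of_nonneg_left ht (abs_nonneg x)) 1
      _ ≤ 2 := by linarith
  have hxd : |x*d| ≤ δ/2 := by
    rw [abs_mul]
    exact le_trans (mul_le_mul_of_nonneg_left hd (abs_nonneg x)) hxC
  have hxh : |x*h| ≤ δ/2 := by
    rw [abs_mul]
    exact le_trans (mul_le_mul_of_nonneg_left hh (abs_nonneg x)) hxC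
  have hcd_lb : δ/2 ≤ c + x*d := by
    have := neg_abs_le (x*d); linarith
  have hgh_lb : δ/2 ≤ g + x*h := by
    have := neg_abs_le (x*h); linarith
  have hcd_ub : |c+x*d| ≤ 2 := by
    have h1 : |c| ≤ 1 := abs_le.2 ⟨by linarith, hc1⟩
    calc |c+x*d| ≤ |c| + |x*d| := abs_add_le _ _
      _ ≤ 2 := by linarith
  have hgh_ub : |g+x*h| ≤ 2 := by
    have h1 : |g| ≤ 1 := abs_le.2 ⟨by linarith, hg1⟩
    calc |g+x*h| ≤ |g| + |x*h| := abs_add_le _ _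
      _ ≤ 2 := by linarith
  have hQlb : δ^2/4 ≤ (c+x*d)*(g+x*h) := by nlinarith
  refine ⟨hQlb, ?_, ?_⟩
  -- bound the pieces
  have h1e0 : |1+x*e0| ≤ 2 := habs _ he0
  have h1e1 : |1+x*e1| ≤ 2 := habs _ he1
  have h1D : |1+x*Dv| ≤ 2 := habs _ hD
  have hin1 : |e1*(1+x*e0) + (1+x*e1)*e0| ≤ 4*C := by
    have := badd _ _ _ _ (bmul _ _ _ _ he1 h1e0 hC) (bmul _ _ _ _ h1e1 he0 (by norm_num))
    calc |e1*(1+x*e0) + (1+x*e1)*e0| ≤ C*2 + 2*C := this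
      _ = 4*C := by ring
  have hP' : |(e1*(1+x*e0) + (1+x*e1)*e0)*(1+x*Dv) + (1+x*e1)*(1+x*e0)*Dv| ≤ 12*C := by
    have t1 := bmul _ _ _ _ hin1 h1D (by positivity)
    have t2 := bmul _ _ _ _ (bmul _ _ _ _ h1e1 h1e0 (by norm_num)) hD (by norm_num)
    have := badd _ _ _ _ t1 t2
    calc |(e1*(1+x*e0) + (1+x*e1)*e0)*(1+x*Dv) + (1+x*e1)*(1+x*e0)*Dv|
        ≤ 4*C*2 + 2*2*C := this
      _ = 12*C := by ring
  have hKP' : |K * ((e1*(1+x*e0) + (1+x*e1)*e0)*(1+x*Dv) + (1+x*e1)*(1+x*e0)*Dv)| ≤ 12*C := by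
    have := bmul _ _ _ _ hK hP' (by norm_num)
    linarith [this]
  have hQub : |(c+x*d)*(g+x*h)| ≤ 4 := by
    have := bmul _ _ _ _ hcd_ub hgh_ub (by norm_num)
    linarith [this]
  have hPub : |K * ((1+x*e1)*(1+x*e0)*(1+x*Dv))| ≤ 8 := by
    have t := bmul _ _ _ _ (bmul _ _ _ _ (bmul _ _ _ _ h1e1 h1e0 (by norm_num)) h1D
      (by norm_num)) hK (by norm_num)
    calc |K * ((1+x*e1)*(1+x*e0)*(1+x*Dv))| = |(1+x*e1)*(1+x*e0)*(1+x*Dv) * K| := by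
          rw [mul_comm]
      _ ≤ 2*2*2*1 := t
      _ = 8 := by norm_num
  have hQ'ub : |d*(g+x*h)+(c+x*d)*h| ≤ 4*C := by
    have := badd _ _ _ _ (bmul _ _ _ _ hd hgh_ub hC) (bmul _ _ _ _ hcd_ub hh (by norm_num))
    calc |d*(g+x*h)+(c+x*d)*h| ≤ C*2 + 2*C := this
      _ = 4*C := by ring
  have hnum : |K * ((e1*(1+x*e0) + (1+x*e1)*e0)*(1+x*Dv) + (1+x*e1)*(1+x*e0)*Dv)
      * ((c+x*d)*(g+x*h)) - K * ((1+x*e1)*(1+x*e0)*(1+x*Dv)) * (d*(g+x*h)+(c+x*d)*h)|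
      ≤ 80*C := by
    have t1 := bmul _ _ _ _ hKP' hQub (by positivity)
    have t2 := bmul _ _ _ _ hPub hQ'ub (by norm_num)
    have := (abs_sub _ _).trans (add_le_add t1 t2)
    calc |K * ((e1*(1+x*e0) + (1+x*e1)*e0)*(1+x*Dv) + (1+x*e1)*(1+x*e0)*Dv)
        * ((c+x*d)*(g+x*h)) - K * ((1+x*e1)*(1+x*e0)*(1+x*Dv)) * (d*(g+x*h)+(c+x*d)*h)|
        ≤ 12*C*4 + 8*(4*C) := this
      _ = 80*C := by ring
  have hQ2 : δ^4/16 ≤ ((c+x*d)*(g+x*h))^2 := by nlinarith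
  have hQ2pos : (0:ℝ) < δ^4/16 := by positivity
  rw [abs_div, abs_of_nonneg (sq_nonneg ((c+x*d)*(g+x*h)))]
  calc _ ≤ (80*C) / (δ^4/16) := by
        apply div_le_div₀ (by positivity) hnum hQ2pos hQ2
    _ ≤ (80*(C+1)) / (δ^4/16) := by
        gcongr
        linarith
    _ = 1280*(C+1)/δ^4 := by
        field_simp
        ring
  · -- value bound
    have h1e0 : |1+x*e0| ≤ 2 := habs _ he0
    have h1e1 : |1+x*e1| ≤ 2 := habs _ he1
    have h1D : |1+x*Dv| ≤ 2 := habs _ hD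
    have hPub : |K * ((1+x*e1)*(1+x*e0)*(1+x*Dv))| ≤ 8 := by
      have t := bmul _ _ _ _ (bmul _ _ _ _ (bmul _ _ _ _ h1e1 h1e0 (by norm_num)) h1D
        (by norm_num)) hK (by norm_num)
      calc |K * ((1+x*e1)*(1+x*e0)*(1+x*Dv))| = |(1+x*e1)*(1+x*e0)*(1+x*Dv) * K| := by
            rw [mul_comm]
        _ ≤ 2*2*2*1 := t
        _ = 8 := by norm_num
    have hQlb' : (0:ℝ) < δ^2/4 := by positivity
    have hQabs : δ^2/4 ≤ |(c+x*d)*(g+x*h)| := le_trans hQlb (le_abs_self _)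
    rw [abs_div]
    calc |K * ((1+x*e1)*(1+x*e0)*(1+x*Dv))| / |(c+x*d)*(g+x*h)|
        ≤ 8 / (δ^2/4) := div_le_div₀ (by norm_num) hPub hQlb' hQabs
      _ = 32/δ^2 := by field_simp; ring

lemma my_condexp_affine {Ω : Type*} {m : MeasurableSpace Ω} [mΩ : MeasurableSpace Ω]
    (μ : Measure Ω) [IsProbabilityMeasure μ] (hm : m ≤ mΩ)
    {f D : Ω → ℝ} (hf : Measurable f) (hD : Measurable D) (Bf BD : ℝ)
    (hfb : ∀ ω, |f ω| ≤ Bf) (hDb : ∀ ω, |D ω| ≤ BD) (ε : ℝ) :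
    μ[fun x => f x * (1 + ε * D x)|m]
      =ᵐ[μ] fun ω => (μ[f|m]) ω + ε * (μ[fun x => f x * D x|m]) ω := by
  haveI : Nonempty Ω := μ.nonempty_of_neZero
  have hBf : 0 ≤ Bf := (abs_nonneg _).trans (hfb (Classical.arbitrary _))
  have hfint : Integrable f μ :=
    my_integrable_of_bound μ Bf hf.aestronglyMeasurable (.of_forall hfb)
  have hfDint : Integrable (fun x => f x * D x) μ :=
    my_integrable_of_bound μ (Bf * BD) (hf.mul hD).aestronglyMeasurable
      (.of_forall fun ω => by
        rw [abs_mul]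
        exact mul_le_mul (hfb ω) (hDb ω) (abs_nonneg _) hBf)
  have h1 : μ[fun x => f x * (1 + ε * D x)|m]
      =ᵐ[μ] μ[f + ε • (fun x => f x * D x)|m] := by
    refine condExp_congr_ae (Filter.Eventually.of_forall fun x => ?_)
    simp only [Pi.add_apply, Pi.smul_apply, smul_eq_mul]
    ring
  have h2 := condExp_add (μ := μ) (m := m) hfint (hfDint.smul ε)
  have h3 := condExp_smul (μ := μ) (m := m) ε (fun x => f x * D x)
  refine h1.trans (h2.trans ?_)
  filter_upwards [h3] with ω hω
  have hω' : (μ[ε • fun x => f x * D x|m]) ω = ε * (μ[fun x => f x * D x|m]) ω := by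
    rw [hω]; simp [smul_eq_mul]
  simp only [Pi.add_apply, hω']

lemma my_condexp_rho {Ω : Type*} {m : MeasurableSpace Ω} [mΩ : MeasurableSpace Ω]
    (μ : Measure Ω) [IsProbabilityMeasure μ] (hm : m ≤ mΩ)
    {D : Ω → ℝ} (hD : Measurable D) (BD : ℝ) (hDb : ∀ ω, |D ω| ≤ BD) (ε : ℝ) :
    μ[fun x => 1 + ε * D x|m] =ᵐ[μ] fun ω => 1 + ε * (μ[D|m]) ω := by
  have hDint : Integrable D μ :=
    my_integrable_of_bound μ BD hD.aestronglyMeasurable (.of_forall hDb)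
  have h1 : μ[fun x => 1 + ε * D x|m]
      =ᵐ[μ] μ[(fun _ => (1:ℝ)) + ε • D|m] := by
    refine condExp_congr_ae (Filter.Eventually.of_forall fun x => ?_)
    simp only [Pi.add_apply, Pi.smul_apply, smul_eq_mul]
  have h2 := condExp_add (μ := μ) (m := m) (integrable_const (1:ℝ)) (hDint.smul ε)
  have h3 := condExp_smul (μ := μ) (m := m) ε D
  refine h1.trans (h2.trans ?_)
  filter_upwards [h3] with ω hω
  have hω' : (μ[ε • D|m]) ω = ε * (μ[D|m]) ω := by
    rw [hω]; simp [smul_eq_mul]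
  simp only [Pi.add_apply, hω', condExp_const hm]

end Deriv

lemma my_hasDerivAt_integral {Ω : Type*} [mΩ : MeasurableSpace Ω] {μ : Measure Ω}
    {F F' : ℝ → Ω → ℝ} {x₀ : ℝ} {bound : Ω → ℝ} {ε : ℝ} (ε_pos : 0 < ε)
    (hF_meas : ∀ x, AEStronglyMeasurable (F x) μ) (hF_int : Integrable (F x₀) μ)
    (hF'_meas : AEStronglyMeasurable (F' x₀) μ)
    (h_bound : ∀ᵐ a ∂μ, ∀ x ∈ Metric.ball x₀ ε, ‖F' x a‖ ≤ bound a)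
    (bound_integrable : Integrable bound μ)
    (h_diff : ∀ᵐ a ∂μ, ∀ x ∈ Metric.ball x₀ ε, HasDerivAt (fun y => F y a) (F' x a) x) :
    HasDerivAt (fun n => ∫ a, F n a ∂μ) (∫ a, F' x₀ a ∂μ) x₀ :=
  (hasDerivAt_integral_of_dominated_loc_of_deriv_le (Metric.ball_mem_nhds x₀ ε_pos) (.of_forall hF_meas) hF_int
    hF'_meas h_bound bound_integrable h_diff).2

set_option maxHeartbeats 2000000 in
/-- pathwise differentiability of the threshold-response parameter along the
submodel `P_ε = (1 + εD)·P`, with derivative `E[D·D₀]` at `ε = 0` (canonical gradient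
characterization of the efficient influence function, Lemma 1). -/
theorem stmt7
    {Ω 𝒲 : Type*} [mΩ : MeasurableSpace Ω] [MeasurableSpace 𝒲]
    (μ : Measure Ω) [IsProbabilityMeasure μ]
    (W : Ω → 𝒲) (A Δ Y : Ω → ℝ)
    (hWmeas : Measurable W) (hAmeas : Measurable A)
    (hΔmeas : Measurable Δ) (hYmeas : Measurable Y)
    (hΔ01 : ∀ ω, Δ ω = 0 ∨ Δ ω = 1) (hY01 : ∀ ω, Y ω ∈ Set.Icc (0 : ℝ) 1)
    (v δ : ℝ) (hδ0 : 0 < δ) (hδ1 : δ < 1)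
    (m0 m1 m2 : MeasurableSpace Ω)
    (hm0 : m0 = MeasurableSpace.comap W inferInstance)
    (hm1 : m1 = MeasurableSpace.comap (fun ω => (A ω, W ω)) inferInstance)
    (hm2 : m2 = MeasurableSpace.comap (fun ω => (A ω, W ω, Δ ω)) inferInstance)
    (G₀ g₀ Q₀ Q₀ᵥ : Ω → ℝ) (Ψ₀ : ℝ)
    (hG₀ : G₀ = μ[Δ | m1])
    (hg₀ : g₀ = μ[fun ω => if v ≤ A ω then (1 : ℝ) else 0 | m0])
    (hQ₀ : Q₀ = fun ω => ((μ[fun ω' => Y ω' * Δ ω' | m1]) ω) / G₀ ω)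
    (hQ₀ᵥ : Q₀ᵥ = fun ω =>
      ((μ[fun ω' => Q₀ ω' * (if v ≤ A ω' then (1 : ℝ) else 0) | m0]) ω) / g₀ ω)
    (hΨ₀ : Ψ₀ = ∫ ω, Q₀ᵥ ω ∂μ)
    (hG₀pos : ∀ᵐ ω ∂μ, δ ≤ G₀ ω)
    (hg₀pos : ∀ᵐ ω ∂μ, δ ≤ g₀ ω)
    (D₀ : Ω → ℝ)
    (hD₀ : D₀ = fun ω =>
      ((if v ≤ A ω then (1 : ℝ) else 0) / g₀ ω) * (Δ ω / G₀ ω) * (Y ω - Q₀ ω)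
      + ((if v ≤ A ω then (1 : ℝ) else 0) / g₀ ω) * (Q₀ ω - Q₀ᵥ ω) + (Q₀ᵥ ω - Ψ₀))
    (D : Ω → ℝ) (C : ℝ) (hDbound : ∀ ω, |D ω| ≤ C)
    (hDmeas : Measurable[MeasurableSpace.comap
      (fun ω => (W ω, A ω, Δ ω, Y ω)) inferInstance] D)
    (hDmean : ∫ ω, D ω ∂μ = 0)
    (Pe : ℝ → @Measure Ω mΩ)
    (hPe : ∀ ε, Pe ε = μ.withDensity (fun ω => ENNReal.ofReal (1 + ε * D ω)))
    (Ψv : @Measure Ω mΩ → ℝ)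
    (hΨv : ∀ ν : @Measure Ω mΩ, Ψv ν =
      ∫ ω, ((ν[fun ω' => (((ν[fun ω'' => Y ω'' * Δ ω'' | m1]) ω') / ((ν[Δ | m1]) ω'))
            * (if v ≤ A ω' then (1 : ℝ) else 0) | m0]) ω)
          / ((ν[fun ω' => if v ≤ A ω' then (1 : ℝ) else 0 | m0]) ω) ∂ν) :
    HasDerivAt (fun ε => Ψv (Pe ε)) (∫ ω, D ω * D₀ ω ∂μ) 0 := by
  classical
  haveI : Nonempty Ω := μ.nonempty_of_neZero
  have hC0 : 0 ≤ C := (abs_nonneg _).trans (hDbound (Classical.arbitrary _))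
  -- measurable-space facts
  have hm1Ω : m1 ≤ mΩ := by rw [hm1]; exact (hAmeas.prodMk hWmeas).comap_le
  have hm0Ω : m0 ≤ mΩ := by rw [hm0]; exact hWmeas.comap_le
  have hm01 : m0 ≤ m1 := by
    rw [hm0, hm1]
    calc MeasurableSpace.comap W inferInstance
        = MeasurableSpace.comap (fun ω => (A ω, W ω))
            (MeasurableSpace.comap (fun p : ℝ × 𝒲 => p.2) inferInstance) := by
          rw [MeasurableSpace.comap_comp]; rfl
      _ ≤ _ := MeasurableSpace.comap_mono measurable_snd.comap_le
  have hA1 : Measurable[m1] A := by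
    rw [hm1]
    exact measurable_fst.comp (Measurable.of_comap_le le_rfl)
  have hDmΩ : Measurable[mΩ] D :=
    hDmeas.mono ((hWmeas.prodMk (hAmeas.prodMk (hΔmeas.prodMk hYmeas))).comap_le) le_rfl
  set ind : Ω → ℝ := fun ω => if v ≤ A ω then (1:ℝ) else 0 with hind
  have hindm1 : Measurable[m1] ind :=
    Measurable.ite (measurableSet_le measurable_const hA1) measurable_const measurable_const
  have hind_sm : StronglyMeasurable[m1] ind := hindm1.stronglyMeasurable
  have hindmΩ : Measurable[mΩ] ind := hindm1.mono hm1Ω le_rfl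
  have hind1 : ∀ ω, |ind ω| ≤ 1 := fun ω => by
    rw [hind]; dsimp only; split <;> simp
  set S : Ω → ℝ := fun ω => Y ω * Δ ω with hS
  have hSm : Measurable[mΩ] S := hYmeas.mul hΔmeas
  have hΔ1 : ∀ ω, |Δ ω| ≤ 1 := fun ω => by
    rcases hΔ01 ω with h' | h' <;> rw [h'] <;> norm_num
  have hY1 : ∀ ω, |Y ω| ≤ 1 := fun ω => by
    rcases hY01 ω with ⟨h1, h2⟩
    rw [abs_le]; constructor <;> linarith
  have hS1 : ∀ ω, |S ω| ≤ 1 := fun ω => by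
    rw [hS]; dsimp only; rw [abs_mul]
    calc |Y ω| * |Δ ω| ≤ 1 * 1 := mul_le_mul (hY1 ω) (hΔ1 ω) (abs_nonneg _) zero_le_one
      _ = 1 := by norm_num
  set eA : Ω → ℝ := μ[D|m1] with heA
  set eW : Ω → ℝ := μ[D|m0] with heW
  set dA : Ω → ℝ := μ[fun ω => Δ ω * D ω|m1] with hdA
  set hw : Ω → ℝ := μ[fun ω => ind ω * D ω|m0] with hhw
  set aY : Ω → ℝ := μ[S|m1] with haY
  -- a.e. bound helpers
  have haeC : ∀ (m' : MeasurableSpace Ω) (X : Ω → ℝ) (B : ℝ), 0 ≤ B → (∀ ω, |X ω| ≤ B) →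
      ∀ᵐ ω ∂μ, |(μ[X|m']) ω| ≤ B := by
    intro m' X B hB hX
    have h2 := ae_bdd_condExp_of_ae_bdd (m := m') (μ := μ) (R := B.toNNReal) (f := X)
      (.of_forall fun ω => by rw [Real.coe_toNNReal _ hB]; exact hX ω)
    filter_upwards [h2] with ω hω
    rwa [Real.coe_toNNReal _ hB] at hω
  have hΔD1 : ∀ ω, |Δ ω * D ω| ≤ C := fun ω => by
    rw [abs_mul]
    calc |Δ ω| * |D ω| ≤ 1 * C := mul_le_mul (hΔ1 ω) (hDbound ω) (abs_nonneg _) zero_le_one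
      _ = C := by norm_num
  have hindD1 : ∀ ω, |ind ω * D ω| ≤ C := fun ω => by
    rw [abs_mul]
    calc |ind ω| * |D ω| ≤ 1 * C := mul_le_mul (hind1 ω) (hDbound ω) (abs_nonneg _) zero_le_one
      _ = C := by norm_num
  have haeA : ∀ᵐ ω ∂μ, |eA ω| ≤ C := haeC m1 D C hC0 hDbound
  have haeW : ∀ᵐ ω ∂μ, |eW ω| ≤ C := haeC m0 D C hC0 hDbound
  have haedA : ∀ᵐ ω ∂μ, |dA ω| ≤ C := haeC m1 _ C hC0 hΔD1
  have haehw : ∀ᵐ ω ∂μ, |hw ω| ≤ C := haeC m0 _ C hC0 hindD1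
  have haeG1 : ∀ᵐ ω ∂μ, |G₀ ω| ≤ 1 := by
    rw [hG₀]; exact haeC m1 Δ 1 zero_le_one hΔ1
  have haeg1 : ∀ᵐ ω ∂μ, |g₀ ω| ≤ 1 := by
    rw [hg₀]; exact haeC m0 ind 1 zero_le_one hind1
  have haeaY : ∀ᵐ ω ∂μ, |aY ω| ≤ 1 := haeC m1 S 1 zero_le_one hS1
  set r : ℝ := δ/(2*(C+1)) with hr
  have hr0 : 0 < r := by rw [hr]; positivity
  set Fφ : ℝ → Ω → ℝ := fun x ω =>
    S ω * ind ω * ((1+x*eA ω)*(1+x*eW ω)*(1+x*D ω)) / ((G₀ ω+x*dA ω)*(g₀ ω+x*hw ω)) with hFφ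
  set Fφ' : ℝ → Ω → ℝ := fun x ω =>
    (S ω * ind ω * ((eA ω*(1+x*eW ω) + (1+x*eA ω)*eW ω)*(1+x*D ω)
        + (1+x*eA ω)*(1+x*eW ω)*D ω) * ((G₀ ω+x*dA ω)*(g₀ ω+x*hw ω))
      - S ω * ind ω * ((1+x*eA ω)*(1+x*eW ω)*(1+x*D ω))
        * (dA ω*(g₀ ω+x*hw ω)+(G₀ ω+x*dA ω)*hw ω)) / ((G₀ ω+x*dA ω)*(g₀ ω+x*hw ω))^2
    with hFφ'
  have key : ∀ ε ∈ Metric.ball (0:ℝ) r, Ψv (Pe ε) = ∫ ω, Fφ ε ω ∂μ := by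
    intro ε hε
    have hεr : |ε| < r := by simpa [Real.dist_eq] using hε
    have hεC : |ε| * C ≤ δ/2 := by
      have h1 : |ε| * C ≤ r * C := mul_le_mul_of_nonneg_right hεr.le hC0
      have h2 : r * C ≤ δ/2 := by
        rw [hr, div_mul_eq_mul_div, div_le_div_iff₀ (by positivity) (by norm_num)]
        nlinarith
      linarith
    have hδh : δ/2 ≤ 1/2 := by linarith
    have hone : ∀ t : ℝ, |t| ≤ C → 1/2 ≤ 1+ε*t ∧ 1+ε*t ≤ 3/2 := by
      intro t ht
      have h1 : |ε*t| ≤ 1/2 := by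
        rw [abs_mul]
        calc |ε| * |t| ≤ |ε| * C := mul_le_mul_of_nonneg_left ht (abs_nonneg _)
          _ ≤ 1/2 := by linarith
      constructor
      · nlinarith [neg_abs_le (ε*t)]
      · nlinarith [le_abs_self (ε*t)]
    have hρl : ∀ ω, 1/2 ≤ 1 + ε * D ω := fun ω => (hone _ (hDbound ω)).1
    have hρu : ∀ ω, 1 + ε * D ω ≤ 3/2 := fun ω => (hone _ (hDbound ω)).2
    have hρ0' : ∀ ω, 0 ≤ 1 + ε * D ω := fun ω => le_trans (by norm_num) (hρl ω)
    have hρm : Measurable[mΩ] (fun ω => 1 + ε * D ω) :=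
      measurable_const.add (measurable_const.mul hDmΩ)
    haveI hfin : IsFiniteMeasure (Pe ε) := by
      rw [hPe]
      exact my_isFiniteMeasure_withDensity (mΩ := mΩ) μ (3/2) hρu
    have hacν : Pe ε ≪ μ := by
      rw [hPe]; exact withDensity_absolutelyContinuous μ _
    -- conditional expectations under Pe ε
    have hGν : (Pe ε)[Δ|m1] =ᵐ[μ] fun ω => (G₀ ω + ε * dA ω) / (1 + ε * eA ω) := by
      rw [hPe]
      refine (my_condexp_withDensity (mΩ := mΩ) μ hm1Ω hρm one_half_pos hρl hρu hΔmeas hΔ1).trans ?_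
      have h1 := my_condexp_affine (mΩ := mΩ) μ hm1Ω hΔmeas hDmΩ 1 C hΔ1 hDbound ε
      have h2 := my_condexp_rho (mΩ := mΩ) μ hm1Ω hDmΩ C hDbound ε
      filter_upwards [h1, h2] with ω h1ω h2ω
      rw [h1ω, h2ω, hG₀, hdA, heA]
    have hgν : (Pe ε)[ind|m0] =ᵐ[μ] fun ω => (g₀ ω + ε * hw ω) / (1 + ε * eW ω) := by
      rw [hPe]
      refine (my_condexp_withDensity (mΩ := mΩ) μ hm0Ω hρm one_half_pos hρl hρu hindmΩ hind1).trans ?_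
      have h1 := my_condexp_affine (mΩ := mΩ) μ hm0Ω hindmΩ hDmΩ 1 C hind1 hDbound ε
      have h2 := my_condexp_rho (mΩ := mΩ) μ hm0Ω hDmΩ C hDbound ε
      filter_upwards [h1, h2] with ω h1ω h2ω
      rw [h1ω, h2ω, hg₀, hhw, heW]
    -- a.e. lower bounds for the conditional expectations
    have hGlb : ∀ᵐ ω ∂μ, δ/3 ≤ (G₀ ω + ε * dA ω) / (1 + ε * eA ω) := by
      filter_upwards [hG₀pos, haedA, haeA] with ω h1 h2 h3
      have hd1 : |ε * dA ω| ≤ δ/2 := by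
        rw [abs_mul]
        calc |ε| * |dA ω| ≤ |ε| * C := mul_le_mul_of_nonneg_left h2 (abs_nonneg _)
          _ ≤ δ/2 := hεC
      have hnum : δ/2 ≤ G₀ ω + ε * dA ω := by nlinarith [neg_abs_le (ε * dA ω)]
      have hden := hone _ h3
      rw [le_div_iff₀ (by linarith [hden.1])]
      nlinarith [hden.2]
    have hglb : ∀ᵐ ω ∂μ, δ/3 ≤ (g₀ ω + ε * hw ω) / (1 + ε * eW ω) := by
      filter_upwards [hg₀pos, haehw, haeW] with ω h1 h2 h3
      have hd1 : |ε * hw ω| ≤ δ/2 := by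
        rw [abs_mul]
        calc |ε| * |hw ω| ≤ |ε| * C := mul_le_mul_of_nonneg_left h2 (abs_nonneg _)
          _ ≤ δ/2 := hεC
      have hnum : δ/2 ≤ g₀ ω + ε * hw ω := by nlinarith [neg_abs_le (ε * hw ω)]
      have hden := hone _ h3
      rw [le_div_iff₀ (by linarith [hden.1])]
      nlinarith [hden.2]
    have hGae : ∀ᵐ ω ∂(Pe ε), δ/3 ≤ ((Pe ε)[Δ|m1]) ω := by
      refine Filter.Eventually.filter_mono hacν.ae_le ?_
      filter_upwards [hGν, hGlb] with ω h1 h2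
      rw [h1]; exact h2
    have hgae : ∀ᵐ ω ∂(Pe ε), δ/3 ≤ ((Pe ε)[ind|m0]) ω := by
      refine Filter.Eventually.filter_mono hacν.ae_le ?_
      filter_upwards [hgν, hglb] with ω h1 h2
      rw [h1]; exact h2
    have hpull := my_psi_pullout (mΩ := mΩ) (Pe ε) hm01 hm1Ω hSm hΔmeas hS1 hΔ1 hind_sm hind1
      (β := δ/3) (by positivity) hGae hgae
    calc Ψv (Pe ε)
        = ∫ ω, S ω * ind ω / (((Pe ε)[Δ|m1]) ω * ((Pe ε)[ind|m0]) ω) ∂(Pe ε) := by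
          rw [hΨv (Pe ε)]; exact hpull
      _ = ∫ ω, (S ω * ind ω / (((Pe ε)[Δ|m1]) ω * ((Pe ε)[ind|m0]) ω)) * (1 + ε * D ω) ∂μ := by
          rw [hPe]
          exact my_integral_withDensity (mΩ := mΩ) μ hρm hρ0' _
      _ = ∫ ω, Fφ ε ω ∂μ := by
          refine integral_congr_ae ?_
          filter_upwards [hGν, hgν, hG₀pos, hg₀pos, haedA, haehw, haeA, haeW]
            with ω h1 h2 h3 h4 h5 h6 h7 h8
          rw [h1, h2, hFφ]
          simp only []
          have hd1 : δ/2 ≤ G₀ ω + ε * dA ω := by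
            have : |ε * dA ω| ≤ δ/2 := by
              rw [abs_mul]
              calc |ε| * |dA ω| ≤ |ε| * C := mul_le_mul_of_nonneg_left h5 (abs_nonneg _)
                _ ≤ δ/2 := hεC
            nlinarith [neg_abs_le (ε * dA ω)]
          have hd2 : δ/2 ≤ g₀ ω + ε * hw ω := by
            have : |ε * hw ω| ≤ δ/2 := by
              rw [abs_mul]
              calc |ε| * |hw ω| ≤ |ε| * C := mul_le_mul_of_nonneg_left h6 (abs_nonneg _)
                _ ≤ δ/2 := hεC
            nlinarith [neg_abs_le (ε * hw ω)]
          have he1 := hone _ h7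
          have he2 := hone _ h8
          have n1 : G₀ ω + ε * dA ω ≠ 0 := by nlinarith [hd1]
          have n2 : g₀ ω + ε * hw ω ≠ 0 := by nlinarith [hd2]
          have n3 : 1 + ε * eA ω ≠ 0 := by nlinarith [he1.1]
          have n4 : 1 + ε * eW ω ≠ 0 := by nlinarith [he2.1]
          field_simp
  have heAm : Measurable[mΩ] eA := by
    rw [heA]; exact (stronglyMeasurable_condExp.mono hm1Ω).measurable
  have heWm : Measurable[mΩ] eW := by
    rw [heW]; exact (stronglyMeasurable_condExp.mono hm0Ω).measurable
  have hdAm : Measurable[mΩ] dA := by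
    rw [hdA]; exact (stronglyMeasurable_condExp.mono hm1Ω).measurable
  have hhwm : Measurable[mΩ] hw := by
    rw [hhw]; exact (stronglyMeasurable_condExp.mono hm0Ω).measurable
  have hG₀m : Measurable[mΩ] G₀ := by
    rw [hG₀]; exact (stronglyMeasurable_condExp.mono hm1Ω).measurable
  have hg₀m : Measurable[mΩ] g₀ := by
    rw [hg₀]; exact (stronglyMeasurable_condExp.mono hm0Ω).measurable
  have haYm : Measurable[mΩ] aY := by
    rw [haY]; exact (stronglyMeasurable_condExp.mono hm1Ω).measurable
  have hae_all : ∀ᵐ ω ∂μ, |eA ω| ≤ C ∧ |eW ω| ≤ C ∧ |dA ω| ≤ C ∧ |hw ω| ≤ C ∧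
      δ ≤ G₀ ω ∧ G₀ ω ≤ 1 ∧ δ ≤ g₀ ω ∧ g₀ ω ≤ 1 := by
    filter_upwards [haeA, haeW, haedA, haehw, hG₀pos, haeG1, hg₀pos, haeg1]
      with ω h1 h2 h3 h4 h5 h6 h7 h8
    exact ⟨h1, h2, h3, h4, h5, (abs_le.1 h6).2, h7, (abs_le.1 h8).2⟩
  have hKb : ∀ ω, |S ω * ind ω| ≤ 1 := fun ω => by
    rw [abs_mul]
    calc |S ω| * |ind ω| ≤ 1 * 1 := mul_le_mul (hS1 ω) (hind1 ω) (abs_nonneg _) zero_le_one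
      _ = 1 := by norm_num
  have hFmeas : ∀ x, AEStronglyMeasurable[mΩ] (Fφ x) μ := by
    intro x
    apply Measurable.aestronglyMeasurable
    exact ((hSm.mul hindmΩ).mul
      (((measurable_const.add (measurable_const.mul heAm)).mul
        (measurable_const.add (measurable_const.mul heWm))).mul
        (measurable_const.add (measurable_const.mul hDmΩ)))).div
      ((hG₀m.add (measurable_const.mul hdAm)).mul (hg₀m.add (measurable_const.mul hhwm)))
  have hF'meas : ∀ x, AEStronglyMeasurable[mΩ] (Fφ' x) μ := by
    intro x
    apply Measurable.aestronglyMeasurable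
    refine Measurable.div ?_ ?_
    · refine Measurable.sub ?_ ?_
      · exact ((hSm.mul hindmΩ).mul
          (((heAm.mul (measurable_const.add (measurable_const.mul heWm))).add
            ((measurable_const.add (measurable_const.mul heAm)).mul heWm)).mul
            (measurable_const.add (measurable_const.mul hDmΩ))
            |>.add (((measurable_const.add (measurable_const.mul heAm)).mul
              (measurable_const.add (measurable_const.mul heWm))).mul hDmΩ))).mul
          ((hG₀m.add (measurable_const.mul hdAm)).mul (hg₀m.add (measurable_const.mul hhwm)))
      · exact ((hSm.mul hindmΩ).mul
          (((measurable_const.add (measurable_const.mul heAm)).mul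
            (measurable_const.add (measurable_const.mul heWm))).mul
            (measurable_const.add (measurable_const.mul hDmΩ)))).mul
          ((hdAm.mul (hg₀m.add (measurable_const.mul hhwm))).add
            ((hG₀m.add (measurable_const.mul hdAm)).mul hhwm))
    · exact ((hG₀m.add (measurable_const.mul hdAm)).mul
        (hg₀m.add (measurable_const.mul hhwm))).pow measurable_const
  have hbnds : ∀ ω, (|eA ω| ≤ C ∧ |eW ω| ≤ C ∧ |dA ω| ≤ C ∧ |hw ω| ≤ C ∧
      δ ≤ G₀ ω ∧ G₀ ω ≤ 1 ∧ δ ≤ g₀ ω ∧ g₀ ω ≤ 1) → ∀ x : ℝ, |x| ≤ r →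
      δ^2/4 ≤ (G₀ ω+x*dA ω)*(g₀ ω+x*hw ω) ∧ |Fφ' x ω| ≤ 1280*(C+1)/δ^4 ∧
        |Fφ x ω| ≤ 32/δ^2 := by
    intro ω h x hx
    obtain ⟨h1, h2, h3, h4, h5, h6, h7, h8⟩ := h
    have := my_ratfn_bound C δ (S ω * ind ω) (eA ω) (eW ω) (D ω) (G₀ ω) (dA ω)
      (g₀ ω) (hw ω) x hC0 hδ0 hδ1.le (hKb ω) h1 h2 (hDbound ω) h3 h4 h5 h6 h7 h8 hx
    exact ⟨this.1, by simpa only [hFφ'] using this.2.1, by simpa only [hFφ] using this.2.2⟩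
  have hFint : Integrable (Fφ 0) μ := by
    refine my_integrable_of_bound (mΩ := mΩ) μ (32/δ^2) (hFmeas 0) ?_
    filter_upwards [hae_all] with ω h
    exact (hbnds ω h 0 (by simpa using hr0.le)).2.2
  have hderiv : HasDerivAt (fun x => ∫ ω, Fφ x ω ∂μ) (∫ ω, Fφ' 0 ω ∂μ) 0 := by
    refine my_hasDerivAt_integral (mΩ := mΩ) (ε := r)
      (bound := fun _ => 1280*(C+1)/δ^4) hr0
      hFmeas hFint (hF'meas 0) ?_ (integrable_const _) ?_
    · filter_upwards [hae_all] with ω h x hx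
      rw [Real.norm_eq_abs]
      exact (hbnds ω h x (by
        have := Metric.mem_ball.1 hx
        rw [Real.dist_eq, sub_zero] at this
        exact this.le)).2.1
    · filter_upwards [hae_all] with ω h x hx
      have hxr : |x| ≤ r := by
        have := Metric.mem_ball.1 hx
        rw [Real.dist_eq, sub_zero] at this
        exact this.le
      have hQne : (G₀ ω + x*dA ω)*(g₀ ω + x*hw ω) ≠ 0 :=
        ne_of_gt (lt_of_lt_of_le (by positivity) (hbnds ω h x hxr).1)
      have hd := my_hasDerivAt_ratfn (S ω * ind ω) (eA ω) (eW ω) (D ω) (G₀ ω) (dA ω)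
        (g₀ ω) (hw ω) x hQne
      simpa only [hFφ, hFφ'] using hd
  have hfinal : ∫ ω, Fφ' 0 ω ∂μ = ∫ ω, D ω * D₀ ω ∂μ := by
    -- rewrite the if-expressions in terms of `ind`
    have hQ₀ᵥ' : Q₀ᵥ = fun ω =>
        ((μ[fun ω' => Q₀ ω' * ind ω' | m0]) ω) / g₀ ω := by
      rw [hQ₀ᵥ]
    have hD₀' : D₀ = fun ω => (ind ω / g₀ ω) * (Δ ω / G₀ ω) * (Y ω - Q₀ ω)
        + (ind ω / g₀ ω) * (Q₀ ω - Q₀ᵥ ω) + (Q₀ᵥ ω - Ψ₀) := by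
      rw [hD₀]
    -- measurability
    have hg₀m0 : Measurable[m0] g₀ := by
      rw [hg₀]; exact stronglyMeasurable_condExp.measurable
    have hG₀m1 : Measurable[m1] G₀ := by
      rw [hG₀]; exact stronglyMeasurable_condExp.measurable
    have haYm1 : Measurable[m1] aY := by
      rw [haY]; exact stronglyMeasurable_condExp.measurable
    have heAm1 : Measurable[m1] eA := by
      rw [heA]; exact stronglyMeasurable_condExp.measurable
    have heWm0 : Measurable[m0] eW := by
      rw [heW]; exact stronglyMeasurable_condExp.measurable
    have hdAm1 : Measurable[m1] dA := by
      rw [hdA]; exact stronglyMeasurable_condExp.measurable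
    have hhwm0 : Measurable[m0] hw := by
      rw [hhw]; exact stronglyMeasurable_condExp.measurable
    have hQ₀m1 : Measurable[m1] Q₀ := by
      rw [hQ₀]; exact haYm1.div hG₀m1
    have hQ₀mΩ : Measurable[mΩ] Q₀ := hQ₀m1.mono hm1Ω le_rfl
    have hQ₀ᵥm0 : Measurable[m0] Q₀ᵥ := by
      rw [hQ₀ᵥ']; exact stronglyMeasurable_condExp.measurable.div hg₀m0
    have hQ₀ᵥmΩ : Measurable[mΩ] Q₀ᵥ := hQ₀ᵥm0.mono hm0Ω le_rfl
    -- helpers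
    have intbd : ∀ (f : Ω → ℝ), Measurable[mΩ] f → ∀ M : ℝ, (∀ᵐ ω ∂μ, |f ω| ≤ M) →
        Integrable f μ := fun f hf M hb =>
      my_integrable_of_bound (mΩ := mΩ) μ M hf.aestronglyMeasurable hb
    have hmulb : ∀ (x y Nx Ny : ℝ), |x| ≤ Nx → |y| ≤ Ny → 0 ≤ Nx → |x*y| ≤ Nx*Ny :=
      fun x y Nx Ny hx hy hNx => by
        rw [abs_mul]; exact mul_le_mul hx hy (abs_nonneg _) hNx
    have hdivb : ∀ (x y Nx dl : ℝ), |x| ≤ Nx → dl ≤ y → 0 < dl → |x/y| ≤ Nx/dl :=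
      fun x y Nx dl hx hy hdl => by
        rw [abs_div, abs_of_pos (lt_of_lt_of_le hdl hy)]
        exact div_le_div₀ (le_trans (abs_nonneg _) hx) hx hdl hy
    -- a.e. bounds for Q₀, Q₀ᵥ
    have haeQ₀ : ∀ᵐ ω ∂μ, |Q₀ ω| ≤ 1/δ := by
      filter_upwards [haeaY, hG₀pos] with ω h1 h2
      rw [hQ₀]
      exact hdivb _ _ _ _ h1 h2 hδ0
    have haeQind : ∀ᵐ ω ∂μ, |Q₀ ω * ind ω| ≤ 1/δ := by
      filter_upwards [haeQ₀] with ω h1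
      have := hmulb _ _ _ _ h1 (hind1 ω) (by positivity)
      simpa using this
    have haeceQ : ∀ᵐ ω ∂μ, |(μ[fun ω' => Q₀ ω' * ind ω' | m0]) ω| ≤ 1/δ := by
      have h2 := ae_bdd_condExp_of_ae_bdd (m := m0) (μ := μ) (R := (1/δ).toNNReal)
        (f := fun ω' => Q₀ ω' * ind ω')
        (haeQind.mono fun ω hω => by rwa [Real.coe_toNNReal _ (by positivity)])
      filter_upwards [h2] with ω hω
      rwa [Real.coe_toNNReal _ (by positivity)] at hω
    have haeQ₀ᵥ : ∀ᵐ ω ∂μ, |Q₀ᵥ ω| ≤ 1/δ^2 := by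
      filter_upwards [haeceQ, hg₀pos] with ω h1 h2
      rw [hQ₀ᵥ']
      have := hdivb _ _ _ _ h1 h2 hδ0
      calc |(μ[fun ω' => Q₀ ω' * ind ω' | m0]) ω / g₀ ω| ≤ (1/δ)/δ := this
        _ = 1/δ^2 := by field_simp
    -- basic integrable functions
    have hDint : Integrable D μ := intbd D hDmΩ C (.of_forall hDbound)
    have hSint : Integrable S μ := intbd S hSm 1 (.of_forall hS1)
    have hΔDint : Integrable (fun ω => Δ ω * D ω) μ :=
      intbd _ (hΔmeas.mul hDmΩ) C (.of_forall hΔD1)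
    have hindDint : Integrable (fun ω => ind ω * D ω) μ :=
      intbd _ (hindmΩ.mul hDmΩ) C (.of_forall hindD1)
    -- split Fφ' 0 into five pieces
    have hsplit : Fφ' 0 =ᵐ[μ] fun ω =>
        (ind ω * eA ω)/(G₀ ω * g₀ ω) * S ω + (ind ω * eW ω)/(G₀ ω * g₀ ω) * S ω
        + (ind ω * D ω)/(G₀ ω * g₀ ω) * S ω - (ind ω * dA ω)/(G₀ ω^2 * g₀ ω) * S ω
        - (ind ω * hw ω)/(G₀ ω * g₀ ω^2) * S ω := by
      filter_upwards [hG₀pos, hg₀pos] with ω h1 h2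
      have hc : G₀ ω ≠ 0 := ne_of_gt (lt_of_lt_of_le hδ0 h1)
      have hgn : g₀ ω ≠ 0 := ne_of_gt (lt_of_lt_of_le hδ0 h2)
      simp only [hFφ']
      simp only [zero_mul, add_zero, mul_one]
      field_simp
      ring
    -- integrability of the pieces
    have hU1int : Integrable (fun ω => (ind ω * D ω)/(G₀ ω * g₀ ω) * S ω) μ := by
      refine intbd _ (((hindmΩ.mul hDmΩ).div (hG₀m.mul hg₀m)).mul hSm) ((1*C)/(δ*δ)*1) ?_
      filter_upwards [hG₀pos, hg₀pos] with ω h1 h2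
      exact hmulb _ _ _ _ (hdivb _ _ _ _ (hmulb _ _ _ _ (hind1 ω) (hDbound ω) zero_le_one)
        (by nlinarith) (by positivity)) (hS1 ω) (by positivity)
    have hU2int : Integrable (fun ω => (ind ω * eA ω)/(G₀ ω * g₀ ω) * S ω) μ := by
      refine intbd _ (((hindmΩ.mul heAm).div (hG₀m.mul hg₀m)).mul hSm) ((1*C)/(δ*δ)*1) ?_
      filter_upwards [hG₀pos, hg₀pos, haeA] with ω h1 h2 h3
      exact hmulb _ _ _ _ (hdivb _ _ _ _ (hmulb _ _ _ _ (hind1 ω) h3 zero_le_one)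
        (by nlinarith) (by positivity)) (hS1 ω) (by positivity)
    have hU3int : Integrable (fun ω => (ind ω * eW ω)/(G₀ ω * g₀ ω) * S ω) μ := by
      refine intbd _ (((hindmΩ.mul heWm).div (hG₀m.mul hg₀m)).mul hSm) ((1*C)/(δ*δ)*1) ?_
      filter_upwards [hG₀pos, hg₀pos, haeW] with ω h1 h2 h3
      exact hmulb _ _ _ _ (hdivb _ _ _ _ (hmulb _ _ _ _ (hind1 ω) h3 zero_le_one)
        (by nlinarith) (by positivity)) (hS1 ω) (by positivity)
    have hU4int : Integrable (fun ω => (ind ω * dA ω)/(G₀ ω^2 * g₀ ω) * S ω) μ := by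
      refine intbd _ (((hindmΩ.mul hdAm).div ((hG₀m.pow measurable_const).mul hg₀m)).mul hSm)
        ((1*C)/(δ^2*δ)*1) ?_
      filter_upwards [hG₀pos, hg₀pos, haedA] with ω h1 h2 h3
      have ha2 : δ^2 ≤ G₀ ω^2 := by nlinarith
      exact hmulb _ _ _ _ (hdivb _ _ _ _ (hmulb _ _ _ _ (hind1 ω) h3 zero_le_one)
        (by nlinarith [sq_nonneg (G₀ ω)]) (by positivity)) (hS1 ω) (by positivity)
    have hU5int : Integrable (fun ω => (ind ω * hw ω)/(G₀ ω * g₀ ω^2) * S ω) μ := by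
      refine intbd _ (((hindmΩ.mul hhwm).div (hG₀m.mul (hg₀m.pow measurable_const))).mul hSm)
        ((1*C)/(δ*δ^2)*1) ?_
      filter_upwards [hG₀pos, hg₀pos, haehw] with ω h1 h2 h3
      have ha2 : δ^2 ≤ g₀ ω^2 := by nlinarith
      exact hmulb _ _ _ _ (hdivb _ _ _ _ (hmulb _ _ _ _ (hind1 ω) h3 zero_le_one)
        (by nlinarith [sq_nonneg (g₀ ω)]) (by positivity)) (hS1 ω) (by positivity)
    -- final-form integrable functions
    have hB1int : Integrable (fun ω => D ω * ((S ω * ind ω)/(G₀ ω * g₀ ω))) μ := by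
      refine intbd _ (hDmΩ.mul ((hSm.mul hindmΩ).div (hG₀m.mul hg₀m))) (C*((1*1)/(δ*δ))) ?_
      filter_upwards [hG₀pos, hg₀pos] with ω h1 h2
      exact hmulb _ _ _ _ (hDbound ω) (hdivb _ _ _ _ (hmulb _ _ _ _ (hS1 ω) (hind1 ω)
        zero_le_one) (by nlinarith) (by positivity)) hC0
    have hB2int : Integrable (fun ω => D ω * ((ind ω * Q₀ ω)/g₀ ω)) μ := by
      refine intbd _ (hDmΩ.mul ((hindmΩ.mul hQ₀mΩ).div hg₀m)) (C*((1*(1/δ))/δ)) ?_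
      filter_upwards [hg₀pos, haeQ₀] with ω h1 h2
      exact hmulb _ _ _ _ (hDbound ω) (hdivb _ _ _ _ (hmulb _ _ _ _ (hind1 ω) h2
        zero_le_one) h1 hδ0) hC0
    have hB3int : Integrable (fun ω => D ω * Q₀ᵥ ω) μ := by
      refine intbd _ (hDmΩ.mul hQ₀ᵥmΩ) (C*(1/δ^2)) ?_
      filter_upwards [haeQ₀ᵥ] with ω h1
      exact hmulb _ _ _ _ (hDbound ω) h1 hC0
    have hB4int : Integrable (fun ω => D ω * ((Δ ω * ind ω * Q₀ ω)/(G₀ ω * g₀ ω))) μ := by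
      refine intbd _ (hDmΩ.mul (((hΔmeas.mul hindmΩ).mul hQ₀mΩ).div (hG₀m.mul hg₀m)))
        (C*((1*1*(1/δ))/(δ*δ))) ?_
      filter_upwards [hG₀pos, hg₀pos, haeQ₀] with ω h1 h2 h3
      exact hmulb _ _ _ _ (hDbound ω) (hdivb _ _ _ _ (hmulb _ _ _ _ (hmulb _ _ _ _ (hΔ1 ω)
        (hind1 ω) zero_le_one) h3 (by norm_num)) (by nlinarith) (by positivity)) hC0
    have hB5int : Integrable (fun ω => D ω * ((ind ω * Q₀ᵥ ω)/g₀ ω)) μ := by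
      refine intbd _ (hDmΩ.mul ((hindmΩ.mul hQ₀ᵥmΩ).div hg₀m)) (C*((1*(1/δ^2))/δ)) ?_
      filter_upwards [hg₀pos, haeQ₀ᵥ] with ω h1 h2
      exact hmulb _ _ _ _ (hDbound ω) (hdivb _ _ _ _ (hmulb _ _ _ _ (hind1 ω) h2
        zero_le_one) h1 hδ0) hC0
    -- strongly measurable multipliers
    have hg₀m1 : Measurable[m1] g₀ := hg₀m0.mono hm01 le_rfl
    have heWm1 : Measurable[m1] eW := heWm0.mono hm01 le_rfl
    have hhwm1 : Measurable[m1] hw := hhwm0.mono hm01 le_rfl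
    have hV2sm : StronglyMeasurable[m1] (fun ω => (ind ω * eA ω)/(G₀ ω * g₀ ω)) :=
      ((hindm1.mul heAm1).div (hG₀m1.mul hg₀m1)).stronglyMeasurable
    have hV3sm : StronglyMeasurable[m1] (fun ω => (ind ω * eW ω)/(G₀ ω * g₀ ω)) :=
      ((hindm1.mul heWm1).div (hG₀m1.mul hg₀m1)).stronglyMeasurable
    have hV4sm : StronglyMeasurable[m1] (fun ω => (ind ω * dA ω)/(G₀ ω^2 * g₀ ω)) :=
      ((hindm1.mul hdAm1).div ((hG₀m1.pow measurable_const).mul hg₀m1)).stronglyMeasurable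
    have hV5sm : StronglyMeasurable[m1] (fun ω => (ind ω * hw ω)/(G₀ ω * g₀ ω^2)) :=
      ((hindm1.mul hhwm1).div (hG₀m1.mul (hg₀m1.pow measurable_const))).stronglyMeasurable
    have hW2sm : StronglyMeasurable[m1] (fun ω => (ind ω * Q₀ ω)/g₀ ω) :=
      ((hindm1.mul hQ₀m1).div hg₀m1).stronglyMeasurable
    have hW4sm : StronglyMeasurable[m1] (fun ω => (ind ω * Q₀ ω)/(G₀ ω * g₀ ω)) :=
      ((hindm1.mul hQ₀m1).div (hG₀m1.mul hg₀m1)).stronglyMeasurable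
    have heWsm0 : StronglyMeasurable[m0] eW := by
      rw [heW]; exact stronglyMeasurable_condExp
    have hhwsm0 : StronglyMeasurable[m0] hw := by
      rw [hhw]; exact stronglyMeasurable_condExp
    have hQ₀ᵥsm0 : StronglyMeasurable[m0] Q₀ᵥ := hQ₀ᵥm0.stronglyMeasurable
    have hQvgsm0 : StronglyMeasurable[m0] (fun ω => Q₀ᵥ ω / g₀ ω) :=
      (hQ₀ᵥm0.div hg₀m0).stronglyMeasurable
    -- more integrable products
    have hδinv : ∀ ω', δ ≤ g₀ ω' → |(g₀ ω')⁻¹| ≤ δ⁻¹ := fun ω' h1 => by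
      rw [abs_inv, abs_of_pos (lt_of_lt_of_le hδ0 h1)]
      exact inv_anti₀ hδ0 h1
    have hX3int : Integrable (fun ω => (ind ω * Q₀ ω)/g₀ ω) μ := by
      refine intbd _ ((hindmΩ.mul hQ₀mΩ).div hg₀m) ((1*(1/δ))/δ) ?_
      filter_upwards [hg₀pos, haeQ₀] with ω h1 h2
      exact hdivb _ _ _ _ (hmulb _ _ _ _ (hind1 ω) h2 zero_le_one) h1 hδ0
    have heWX3int : Integrable (fun ω => eW ω * ((ind ω * Q₀ ω)/g₀ ω)) μ := by
      refine intbd _ (heWm.mul ((hindmΩ.mul hQ₀mΩ).div hg₀m)) (C*((1*(1/δ))/δ)) ?_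
      filter_upwards [hg₀pos, haeQ₀, haeW] with ω h1 h2 h3
      exact hmulb _ _ _ _ h3 (hdivb _ _ _ _ (hmulb _ _ _ _ (hind1 ω) h2 zero_le_one) h1 hδ0) hC0
    have hQ₀ᵥDint : Integrable (fun ω => Q₀ᵥ ω * D ω) μ := by
      refine intbd _ (hQ₀ᵥmΩ.mul hDmΩ) ((1/δ^2)*C) ?_
      filter_upwards [haeQ₀ᵥ] with ω h1
      exact hmulb _ _ _ _ h1 (hDbound ω) (by positivity)
    have hQ₀ᵥeWint : Integrable (fun ω => Q₀ᵥ ω * eW ω) μ := by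
      refine intbd _ (hQ₀ᵥmΩ.mul heWm) ((1/δ^2)*C) ?_
      filter_upwards [haeQ₀ᵥ, haeW] with ω h1 h2
      exact hmulb _ _ _ _ h1 h2 (by positivity)
    have hW2Dint : Integrable (fun ω => (ind ω * Q₀ ω)/g₀ ω * D ω) μ := by
      refine intbd _ (((hindmΩ.mul hQ₀mΩ).div hg₀m).mul hDmΩ) (((1*(1/δ))/δ)*C) ?_
      filter_upwards [hg₀pos, haeQ₀] with ω h1 h2
      exact hmulb _ _ _ _ (hdivb _ _ _ _ (hmulb _ _ _ _ (hind1 ω) h2 zero_le_one) h1 hδ0)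
        (hDbound ω) (by positivity)
    have hW4ΔDint : Integrable (fun ω => (ind ω * Q₀ ω)/(G₀ ω * g₀ ω) * (Δ ω * D ω)) μ := by
      refine intbd _ (((hindmΩ.mul hQ₀mΩ).div (hG₀m.mul hg₀m)).mul (hΔmeas.mul hDmΩ))
        (((1*(1/δ))/(δ*δ))*C) ?_
      filter_upwards [hG₀pos, hg₀pos, haeQ₀] with ω h1 h2 h3
      exact hmulb _ _ _ _ (hdivb _ _ _ _ (hmulb _ _ _ _ (hind1 ω) h3 zero_le_one)
        (by nlinarith) (by positivity)) (hΔD1 ω) (by positivity)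
    have hX5int : Integrable (fun ω => (ind ω * Q₀ ω)/g₀ ω^2) μ := by
      refine intbd _ ((hindmΩ.mul hQ₀mΩ).div (hg₀m.pow measurable_const)) ((1*(1/δ))/δ^2) ?_
      filter_upwards [hg₀pos, haeQ₀] with ω h1 h2
      have ha2 : δ^2 ≤ g₀ ω^2 := by nlinarith
      exact hdivb _ _ _ _ (hmulb _ _ _ _ (hind1 ω) h2 zero_le_one) ha2 (by positivity)
    have hhwX5int : Integrable (fun ω => hw ω * ((ind ω * Q₀ ω)/g₀ ω^2)) μ := by
      refine intbd _ (hhwm.mul ((hindmΩ.mul hQ₀mΩ).div (hg₀m.pow measurable_const)))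
        (C*((1*(1/δ))/δ^2)) ?_
      filter_upwards [hg₀pos, haeQ₀, haehw] with ω h1 h2 h3
      have ha2 : δ^2 ≤ g₀ ω^2 := by nlinarith
      exact hmulb _ _ _ _ h3 (hdivb _ _ _ _ (hmulb _ _ _ _ (hind1 ω) h2 zero_le_one) ha2
        (by positivity)) hC0
    have hhwQvgint : Integrable (fun ω => Q₀ᵥ ω / g₀ ω * hw ω) μ := by
      refine intbd _ ((hQ₀ᵥmΩ.div hg₀m).mul hhwm) (((1/δ^2)/δ)*C) ?_
      filter_upwards [hg₀pos, haeQ₀ᵥ, haehw] with ω h1 h2 h3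
      exact hmulb _ _ _ _ (hdivb _ _ _ _ h2 h1 hδ0) h3 (by positivity)
    have hQvgindDint : Integrable (fun ω => Q₀ᵥ ω / g₀ ω * (ind ω * D ω)) μ := by
      refine intbd _ ((hQ₀ᵥmΩ.div hg₀m).mul (hindmΩ.mul hDmΩ)) (((1/δ^2)/δ)*C) ?_
      filter_upwards [hg₀pos, haeQ₀ᵥ] with ω h1 h2
      exact hmulb _ _ _ _ (hdivb _ _ _ _ h2 h1 hδ0) (hindD1 ω) (by positivity)
    have hQ₀indint : Integrable (fun ω => Q₀ ω * ind ω) μ := by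
      refine intbd _ (hQ₀mΩ.mul hindmΩ) ((1/δ)*1) ?_
      filter_upwards [haeQ₀] with ω h1
      exact hmulb _ _ _ _ h1 (hind1 ω) (by positivity)
    -- conditional expectation pull-out identities
    have hX3ce : μ[fun ω => (ind ω * Q₀ ω)/g₀ ω|m0] =ᵐ[μ] Q₀ᵥ := by
      have hint1 : Integrable (fun ω => (g₀ ω)⁻¹ * (Q₀ ω * ind ω)) μ := by
        refine intbd _ (hg₀m.inv.mul (hQ₀mΩ.mul hindmΩ)) (δ⁻¹*((1/δ)*1)) ?_
        filter_upwards [hg₀pos, haeQ₀] with ω h1 h2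
        exact hmulb _ _ _ _ (hδinv ω h1) (hmulb _ _ _ _ h2 (hind1 ω) (by positivity))
          (by positivity)
      have hp := condExp_mul_of_stronglyMeasurable_left (μ := μ) (m := m0)
        (hg₀m0.inv.stronglyMeasurable) hint1 hQ₀indint
      have e0 : (fun ω => (ind ω * Q₀ ω)/g₀ ω)
          =ᵐ[μ] fun ω => (g₀ ω)⁻¹ * (Q₀ ω * ind ω) :=
        .of_forall fun ω => by
          show (ind ω * Q₀ ω)/g₀ ω = (g₀ ω)⁻¹ * (Q₀ ω * ind ω)
          rw [div_eq_inv_mul]; ring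
      refine (condExp_congr_ae e0).trans ?_
      refine Filter.EventuallyEq.trans ?_
        (?_ : (fun ω => (g₀ ω)⁻¹ * (μ[fun ω' => Q₀ ω' * ind ω'|m0]) ω) =ᵐ[μ] Q₀ᵥ)
      · filter_upwards [hp] with ω hω
        simpa [Pi.mul_def] using hω
      · refine .of_forall fun ω => ?_
        simp only [hQ₀ᵥ']
        rw [div_eq_inv_mul]
    have hX5ce : μ[fun ω => (ind ω * Q₀ ω)/g₀ ω^2|m0] =ᵐ[μ] fun ω => Q₀ᵥ ω / g₀ ω := by
      have hint1 : Integrable (fun ω => (g₀ ω^2)⁻¹ * (Q₀ ω * ind ω)) μ := by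
        refine intbd _ ((hg₀m.pow measurable_const).inv.mul (hQ₀mΩ.mul hindmΩ))
          ((δ^2)⁻¹*((1/δ)*1)) ?_
        filter_upwards [hg₀pos, haeQ₀] with ω h1 h2
        refine hmulb _ _ _ _ ?_ (hmulb _ _ _ _ h2 (hind1 ω) (by positivity)) (by positivity)
        have ha2 : δ^2 ≤ g₀ ω^2 := by nlinarith
        have hgpos : 0 < g₀ ω := lt_of_lt_of_le hδ0 h1
        rw [abs_inv, abs_of_pos (pow_pos hgpos 2)]
        exact inv_anti₀ (by positivity) ha2
      have hp := condExp_mul_of_stronglyMeasurable_left (μ := μ) (m := m0)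
        ((hg₀m0.pow measurable_const).inv.stronglyMeasurable) hint1 hQ₀indint
      have e0 : (fun ω => (ind ω * Q₀ ω)/g₀ ω^2)
          =ᵐ[μ] fun ω => (g₀ ω^2)⁻¹ * (Q₀ ω * ind ω) :=
        .of_forall fun ω => by
          show (ind ω * Q₀ ω)/g₀ ω^2 = (g₀ ω^2)⁻¹ * (Q₀ ω * ind ω)
          rw [div_eq_inv_mul]; ring
      refine (condExp_congr_ae e0).trans ?_
      refine Filter.EventuallyEq.trans ?_
        (?_ : (fun ω => (g₀ ω^2)⁻¹ * (μ[fun ω' => Q₀ ω' * ind ω'|m0]) ω)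
          =ᵐ[μ] fun ω => Q₀ᵥ ω / g₀ ω)
      · filter_upwards [hp] with ω hω
        simpa [Pi.mul_def] using hω
      · refine .of_forall fun ω => ?_
        simp only [hQ₀ᵥ']
        rw [div_div, ← sq, div_eq_inv_mul]
    -- the five integral identities (swap steps)
    have hT1 : ∫ ω, (ind ω * D ω)/(G₀ ω * g₀ ω) * S ω ∂μ
        = ∫ ω, D ω * ((S ω * ind ω)/(G₀ ω * g₀ ω)) ∂μ := by
      refine integral_congr_ae (.of_forall fun ω => ?_)
      ring
    have hT2 : ∫ ω, (ind ω * eA ω)/(G₀ ω * g₀ ω) * S ω ∂μ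
        = ∫ ω, D ω * ((ind ω * Q₀ ω)/g₀ ω) ∂μ := by
      have e2a : ∫ ω, (ind ω * eA ω)/(G₀ ω * g₀ ω) * S ω ∂μ
          = ∫ ω, (ind ω * eA ω)/(G₀ ω * g₀ ω) * aY ω ∂μ := by
        rw [haY]
        exact (my_integral_condexp_mul (mΩ := mΩ) μ hm1Ω hV2sm hSint hU2int).symm
      have e2b : ∫ ω, (ind ω * eA ω)/(G₀ ω * g₀ ω) * aY ω ∂μ
          = ∫ ω, (ind ω * Q₀ ω)/g₀ ω * eA ω ∂μ := by
        refine integral_congr_ae (.of_forall fun ω => ?_)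
        simp only [hQ₀]
        ring
      have e2c : ∫ ω, (ind ω * Q₀ ω)/g₀ ω * eA ω ∂μ
          = ∫ ω, (ind ω * Q₀ ω)/g₀ ω * D ω ∂μ := by
        rw [heA]
        exact my_integral_condexp_mul (mΩ := mΩ) μ hm1Ω hW2sm hDint hW2Dint
      have e2d : ∫ ω, (ind ω * Q₀ ω)/g₀ ω * D ω ∂μ
          = ∫ ω, D ω * ((ind ω * Q₀ ω)/g₀ ω) ∂μ := by
        refine integral_congr_ae (.of_forall fun ω => ?_)
        ring
      rw [e2a, e2b, e2c, e2d]
    have hT3 : ∫ ω, (ind ω * eW ω)/(G₀ ω * g₀ ω) * S ω ∂μ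
        = ∫ ω, D ω * Q₀ᵥ ω ∂μ := by
      have e3a : ∫ ω, (ind ω * eW ω)/(G₀ ω * g₀ ω) * S ω ∂μ
          = ∫ ω, (ind ω * eW ω)/(G₀ ω * g₀ ω) * aY ω ∂μ := by
        rw [haY]
        exact (my_integral_condexp_mul (mΩ := mΩ) μ hm1Ω hV3sm hSint hU3int).symm
      have e3b : ∫ ω, (ind ω * eW ω)/(G₀ ω * g₀ ω) * aY ω ∂μ
          = ∫ ω, eW ω * ((ind ω * Q₀ ω)/g₀ ω) ∂μ := by
        refine integral_congr_ae (.of_forall fun ω => ?_)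
        simp only [hQ₀]
        ring
      have e3c : ∫ ω, eW ω * ((ind ω * Q₀ ω)/g₀ ω) ∂μ
          = ∫ ω, eW ω * (μ[fun ω' => (ind ω' * Q₀ ω')/g₀ ω'|m0]) ω ∂μ := by
        refine (my_integral_condexp_mul (mΩ := mΩ) μ hm0Ω heWsm0 hX3int heWX3int).symm
      have e3d : ∫ ω, eW ω * (μ[fun ω' => (ind ω' * Q₀ ω')/g₀ ω'|m0]) ω ∂μ
          = ∫ ω, Q₀ᵥ ω * eW ω ∂μ := by
        refine integral_congr_ae ?_
        filter_upwards [hX3ce] with ω hω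
        rw [hω]; ring
      have e3e : ∫ ω, Q₀ᵥ ω * eW ω ∂μ = ∫ ω, Q₀ᵥ ω * D ω ∂μ := by
        rw [heW]
        exact my_integral_condexp_mul (mΩ := mΩ) μ hm0Ω hQ₀ᵥsm0 hDint hQ₀ᵥDint
      have e3f : ∫ ω, Q₀ᵥ ω * D ω ∂μ = ∫ ω, D ω * Q₀ᵥ ω ∂μ := by
        refine integral_congr_ae (.of_forall fun ω => ?_)
        ring
      rw [e3a, e3b, e3c, e3d, e3e, e3f]
    have hT4 : ∫ ω, (ind ω * dA ω)/(G₀ ω^2 * g₀ ω) * S ω ∂μ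
        = ∫ ω, D ω * ((Δ ω * ind ω * Q₀ ω)/(G₀ ω * g₀ ω)) ∂μ := by
      have e4a : ∫ ω, (ind ω * dA ω)/(G₀ ω^2 * g₀ ω) * S ω ∂μ
          = ∫ ω, (ind ω * dA ω)/(G₀ ω^2 * g₀ ω) * aY ω ∂μ := by
        rw [haY]
        exact (my_integral_condexp_mul (mΩ := mΩ) μ hm1Ω hV4sm hSint hU4int).symm
      have e4b : ∫ ω, (ind ω * dA ω)/(G₀ ω^2 * g₀ ω) * aY ω ∂μ
          = ∫ ω, (ind ω * Q₀ ω)/(G₀ ω * g₀ ω) * dA ω ∂μ := by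
        refine integral_congr_ae (.of_forall fun ω => ?_)
        simp only [hQ₀]
        ring
      have e4c : ∫ ω, (ind ω * Q₀ ω)/(G₀ ω * g₀ ω) * dA ω ∂μ
          = ∫ ω, (ind ω * Q₀ ω)/(G₀ ω * g₀ ω) * (Δ ω * D ω) ∂μ := by
        rw [hdA]
        exact my_integral_condexp_mul (mΩ := mΩ) μ hm1Ω hW4sm hΔDint hW4ΔDint
      have e4d : ∫ ω, (ind ω * Q₀ ω)/(G₀ ω * g₀ ω) * (Δ ω * D ω) ∂μ
          = ∫ ω, D ω * ((Δ ω * ind ω * Q₀ ω)/(G₀ ω * g₀ ω)) ∂μ := by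
        refine integral_congr_ae (.of_forall fun ω => ?_)
        ring
      rw [e4a, e4b, e4c, e4d]
    have hT5 : ∫ ω, (ind ω * hw ω)/(G₀ ω * g₀ ω^2) * S ω ∂μ
        = ∫ ω, D ω * ((ind ω * Q₀ᵥ ω)/g₀ ω) ∂μ := by
      have e5a : ∫ ω, (ind ω * hw ω)/(G₀ ω * g₀ ω^2) * S ω ∂μ
          = ∫ ω, (ind ω * hw ω)/(G₀ ω * g₀ ω^2) * aY ω ∂μ := by
        rw [haY]
        exact (my_integral_condexp_mul (mΩ := mΩ) μ hm1Ω hV5sm hSint hU5int).symm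
      have e5b : ∫ ω, (ind ω * hw ω)/(G₀ ω * g₀ ω^2) * aY ω ∂μ
          = ∫ ω, hw ω * ((ind ω * Q₀ ω)/g₀ ω^2) ∂μ := by
        refine integral_congr_ae (.of_forall fun ω => ?_)
        simp only [hQ₀]
        ring
      have e5c : ∫ ω, hw ω * ((ind ω * Q₀ ω)/g₀ ω^2) ∂μ
          = ∫ ω, hw ω * (μ[fun ω' => (ind ω' * Q₀ ω')/g₀ ω'^2|m0]) ω ∂μ := by
        exact (my_integral_condexp_mul (mΩ := mΩ) μ hm0Ω hhwsm0 hX5int hhwX5int).symm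
      have e5d : ∫ ω, hw ω * (μ[fun ω' => (ind ω' * Q₀ ω')/g₀ ω'^2|m0]) ω ∂μ
          = ∫ ω, Q₀ᵥ ω / g₀ ω * hw ω ∂μ := by
        refine integral_congr_ae ?_
        filter_upwards [hX5ce] with ω hω
        rw [hω]; ring
      have e5e : ∫ ω, Q₀ᵥ ω / g₀ ω * hw ω ∂μ
          = ∫ ω, Q₀ᵥ ω / g₀ ω * (ind ω * D ω) ∂μ := by
        rw [hhw]
        exact my_integral_condexp_mul (mΩ := mΩ) μ hm0Ω hQvgsm0 hindDint hQvgindDint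
      have e5f : ∫ ω, Q₀ᵥ ω / g₀ ω * (ind ω * D ω) ∂μ
          = ∫ ω, D ω * ((ind ω * Q₀ᵥ ω)/g₀ ω) ∂μ := by
        refine integral_congr_ae (.of_forall fun ω => ?_)
        ring
      rw [e5a, e5b, e5c, e5d, e5e, e5f]
    -- combine everything
    have hΨDint : Integrable (fun ω => Ψ₀ * D ω) μ := hDint.const_mul Ψ₀
    have hsumInt : Integrable (fun ω => D ω * ((ind ω * Q₀ ω)/g₀ ω) + D ω * Q₀ᵥ ω
        + D ω * ((S ω * ind ω)/(G₀ ω * g₀ ω)) - D ω * ((Δ ω * ind ω * Q₀ ω)/(G₀ ω * g₀ ω))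
        - D ω * ((ind ω * Q₀ᵥ ω)/g₀ ω)) μ := by
      exact (((hB2int.add hB3int).add hB1int).sub hB4int).sub hB5int
    have hcongr : (fun ω => D ω * ((ind ω * Q₀ ω)/g₀ ω) + D ω * Q₀ᵥ ω
        + D ω * ((S ω * ind ω)/(G₀ ω * g₀ ω)) - D ω * ((Δ ω * ind ω * Q₀ ω)/(G₀ ω * g₀ ω))
        - D ω * ((ind ω * Q₀ᵥ ω)/g₀ ω))
        =ᵐ[μ] fun ω => D ω * D₀ ω + Ψ₀ * D ω := by
      refine .of_forall fun ω => ?_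
      simp only [hD₀', hS]
      ring
    have hDD₀addint : Integrable (fun ω => D ω * D₀ ω + Ψ₀ * D ω) μ := hsumInt.congr hcongr
    have hDD₀int : Integrable (fun ω => D ω * D₀ ω) μ := by
      have h2 := hDD₀addint.sub hΨDint
      refine h2.congr (.of_forall fun ω => ?_)
      simp only [Pi.sub_apply]
      ring
    calc ∫ ω, Fφ' 0 ω ∂μ
        = ∫ ω, ((ind ω * eA ω)/(G₀ ω * g₀ ω) * S ω + (ind ω * eW ω)/(G₀ ω * g₀ ω) * S ω
          + (ind ω * D ω)/(G₀ ω * g₀ ω) * S ω - (ind ω * dA ω)/(G₀ ω^2 * g₀ ω) * S ω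
          - (ind ω * hw ω)/(G₀ ω * g₀ ω^2) * S ω) ∂μ := integral_congr_ae hsplit
      _ = ∫ ω, (ind ω * eA ω)/(G₀ ω * g₀ ω) * S ω ∂μ
          + ∫ ω, (ind ω * eW ω)/(G₀ ω * g₀ ω) * S ω ∂μ
          + ∫ ω, (ind ω * D ω)/(G₀ ω * g₀ ω) * S ω ∂μ
          - ∫ ω, (ind ω * dA ω)/(G₀ ω^2 * g₀ ω) * S ω ∂μ
          - ∫ ω, (ind ω * hw ω)/(G₀ ω * g₀ ω^2) * S ω ∂μ := by
        have hI2 : Integrable (fun ω => (ind ω * eA ω)/(G₀ ω * g₀ ω) * S ω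
            + (ind ω * eW ω)/(G₀ ω * g₀ ω) * S ω) μ := hU2int.add hU3int
        have hI3 : Integrable (fun ω => (ind ω * eA ω)/(G₀ ω * g₀ ω) * S ω
            + (ind ω * eW ω)/(G₀ ω * g₀ ω) * S ω
            + (ind ω * D ω)/(G₀ ω * g₀ ω) * S ω) μ := hI2.add hU1int
        have hI4 : Integrable (fun ω => (ind ω * eA ω)/(G₀ ω * g₀ ω) * S ω
            + (ind ω * eW ω)/(G₀ ω * g₀ ω) * S ω
            + (ind ω * D ω)/(G₀ ω * g₀ ω) * S ω
            - (ind ω * dA ω)/(G₀ ω^2 * g₀ ω) * S ω) μ := hI3.sub hU4int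
        rw [integral_sub hI4 hU5int, integral_sub hI3 hU4int,
          integral_add hI2 hU1int, integral_add hU2int hU3int]
      _ = ∫ ω, D ω * ((ind ω * Q₀ ω)/g₀ ω) ∂μ + ∫ ω, D ω * Q₀ᵥ ω ∂μ
          + ∫ ω, D ω * ((S ω * ind ω)/(G₀ ω * g₀ ω)) ∂μ
          - ∫ ω, D ω * ((Δ ω * ind ω * Q₀ ω)/(G₀ ω * g₀ ω)) ∂μ
          - ∫ ω, D ω * ((ind ω * Q₀ᵥ ω)/g₀ ω) ∂μ := by
        rw [hT1, hT2, hT3, hT4, hT5]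
      _ = ∫ ω, (D ω * ((ind ω * Q₀ ω)/g₀ ω) + D ω * Q₀ᵥ ω
          + D ω * ((S ω * ind ω)/(G₀ ω * g₀ ω)) - D ω * ((Δ ω * ind ω * Q₀ ω)/(G₀ ω * g₀ ω))
          - D ω * ((ind ω * Q₀ᵥ ω)/g₀ ω)) ∂μ := by
        have hJ2 : Integrable (fun ω => D ω * ((ind ω * Q₀ ω)/g₀ ω)
            + D ω * Q₀ᵥ ω) μ := hB2int.add hB3int
        have hJ3 : Integrable (fun ω => D ω * ((ind ω * Q₀ ω)/g₀ ω) + D ω * Q₀ᵥ ω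
            + D ω * ((S ω * ind ω)/(G₀ ω * g₀ ω))) μ := hJ2.add hB1int
        have hJ4 : Integrable (fun ω => D ω * ((ind ω * Q₀ ω)/g₀ ω) + D ω * Q₀ᵥ ω
            + D ω * ((S ω * ind ω)/(G₀ ω * g₀ ω))
            - D ω * ((Δ ω * ind ω * Q₀ ω)/(G₀ ω * g₀ ω))) μ := hJ3.sub hB4int
        rw [← integral_add hB2int hB3int, ← integral_add hJ2 hB1int,
          ← integral_sub hJ3 hB4int, ← integral_sub hJ4 hB5int]
      _ = ∫ ω, (D ω * D₀ ω + Ψ₀ * D ω) ∂μ := integral_congr_ae hcongr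
      _ = ∫ ω, D ω * D₀ ω ∂μ + Ψ₀ * ∫ ω, D ω ∂μ := by
        rw [integral_add hDD₀int hΨDint, integral_const_mul]
      _ = ∫ ω, D ω * D₀ ω ∂μ := by
        rw [hDmean, mul_zero, add_zero]
  rw [← hfinal]
  refine hderiv.congr_of_eventuallyEq ?_
  filter_upwards [Metric.ball_mem_nhds (0:ℝ) hr0] with ε hε
  exact key ε hε
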